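/- Fix a real number m > 1 and a natural number n ≥ 3, and let (X, Y, W) : ℝ → ℝ³ be a differentiable solution of the Böhm system with Y(t) > 0, W(t) > 0 and α·X(t) ≠ 1 for all t. Define κ(t) = W(t)^{−2m/(m+n−1)} · Y(t)^{−2(n−1)/(m+n−1)} · (1 − α·X(t))². Then κ is differentiable and satisfies κ′(t) = −(2(n−1)/((m−1)(m+n−1))) · (1 − X(t)/α)² · (1 − α·X(t))^{−1} · κ(t) for all t. (This is the Lyapunov-derivative computation for Böhm's function κ in the proof of Theorem 5.7 of the paper, where 1/α = √(m(m+n−2)/(n−1)).) -/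

import Mathlib

noncomputable section

lemma boehm_key_identity (m ν x y l c : ℝ) (hm : m - 1 ≠ 0) (hl : l ≠ 0)
    (hp : m + ν - 1 ≠ 0) (hM : m * (m + ν - 2) ≠ 0) (h1 : 1 - l * x ≠ 0)
    (hA : l ^ 2 = (ν - 1) / (m * (m + ν - 2))) (hc : c = 1 / ((m - 1) * l)) :
    (-2 * m / (m + ν - 1)) * (x ^ 2 - y ^ 2 / (m - 1)) * (1 - l * x) ^ 2
      + (-2 * (ν - 1) / (m + ν - 1)) * ((x ^ 2 - y ^ 2 / (m - 1)) - c * x + 1 / (m - 1))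
          * (1 - l * x) ^ 2
      + 2 * (1 - l * x) * (-(l * (x * (x ^ 2 - y ^ 2 / (m - 1)) + c * y ^ 2 - x)))
    = -(2 * (ν - 1) / ((m - 1) * (m + ν - 1))) * (1 - x / l) ^ 2 * (1 - l * x)⁻¹
        * (1 - l * x) ^ 2 := by
  have hA0 : l ^ 2 - (ν - 1) / (m * (m + ν - 2)) = 0 := by rw [hA]; ring
  set F : ℝ := (x / l) * (2 - (-2 * (ν - 1) / (m + ν - 1)) / (m - 1)) * (1 - x / l) * (1 - l * x) with hF
  have hfact :
      (-2 * m / (m + ν - 1)) * (x ^ 2 - y ^ 2 / (m - 1)) * (1 - l * x) ^ 2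
      + (-2 * (ν - 1) / (m + ν - 1)) * ((x ^ 2 - y ^ 2 / (m - 1)) - c * x + 1 / (m - 1))
          * (1 - l * x) ^ 2
      + 2 * (1 - l * x) * (-(l * (x * (x ^ 2 - y ^ 2 / (m - 1)) + c * y ^ 2 - x)))
      - (-(2 * (ν - 1) / ((m - 1) * (m + ν - 1))) * (1 - x / l) ^ 2 * (1 - l * x)⁻¹
        * (1 - l * x) ^ 2)
      = F * (l ^ 2 - (ν - 1) / (m * (m + ν - 2))) := by
    subst hc; rw [hF]
    have hm0 : m ≠ 0 := left_ne_zero_of_mul hM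
    have hM2 : m + ν - 2 ≠ 0 := right_ne_zero_of_mul hM
    field_simp
    ring
  linear_combination hfact + F * hA0

/-- The Lyapunov-derivative computation for Böhm's function `κ` in the proof of
Theorem 5.7 of the paper: along a solution of the Böhm system with `Y > 0`, `W > 0`
and `αX ≠ 1`, the function
`κ = W^{−2m/(m+n−1)} Y^{−2(n−1)/(m+n−1)} (1 − αX)²` satisfies
`κ′ = −(2(n−1)/((m−1)(m+n−1))) (1 − X/α)² (1 − αX)⁻¹ κ`. -/
theorem boehm_lyapunov_deriv (m : ℝ) (hm : 1 < m) (n : ℕ) (hn : 3 ≤ n)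
    (X Y W : ℝ → ℝ)
    (c : ℝ) (hc : c = (1 / (m - 1)) * Real.sqrt (m * (m + n - 2) / (n - 1)))
    (α : ℝ) (hα : α = Real.sqrt ((n - 1) / (m * (m + n - 2))))
    (hX : ∀ t, HasDerivAt X
      (X t * (X t ^ 2 - Y t ^ 2 / (m - 1)) + c * Y t ^ 2 - X t) t)
    (hY : ∀ t, HasDerivAt Y
      (Y t * (X t ^ 2 - Y t ^ 2 / (m - 1)) - c * X t * Y t + Y t / (m - 1)) t)
    (hW : ∀ t, HasDerivAt W (W t * (X t ^ 2 - Y t ^ 2 / (m - 1))) t)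
    (hYpos : ∀ t, 0 < Y t) (hWpos : ∀ t, 0 < W t)
    (hαX : ∀ t, α * X t ≠ 1)
    (κ : ℝ → ℝ)
    (hκ : ∀ t, κ t = W t ^ (-2 * m / (m + n - 1)) *
      Y t ^ (-2 * ((n : ℝ) - 1) / (m + n - 1)) * (1 - α * X t) ^ 2) :
    ∀ t, HasDerivAt κ
      (-(2 * ((n : ℝ) - 1) / ((m - 1) * (m + n - 1))) * (1 - X t / α) ^ 2 *
        (1 - α * X t)⁻¹ * κ t) t := by
  have hκfun : κ = fun t => W t ^ (-2 * m / (m + (n : ℝ) - 1)) *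
      Y t ^ (-2 * ((n : ℝ) - 1) / (m + n - 1)) * (1 - α * X t) ^ 2 := funext hκ
  subst hκfun
  -- basic positivity
  have hn3 : (3 : ℝ) ≤ (n : ℝ) := by exact_mod_cast hn
  have hn1 : (0 : ℝ) < (n : ℝ) - 1 := by linarith
  have hm0 : (0 : ℝ) < m := by linarith
  have hm1' : (0:ℝ) < m - 1 := by linarith
  have hm1 : m - 1 ≠ 0 := hm1'.ne'
  have hM0 : (0 : ℝ) < m * (m + (n : ℝ) - 2) := by nlinarith
  have hp0' : (0:ℝ) < m + (n : ℝ) - 1 := by linarith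
  have hp0 : m + (n : ℝ) - 1 ≠ 0 := hp0'.ne'
  have hαpos : 0 < α := by
    rw [hα]; exact Real.sqrt_pos.mpr (by positivity)
  have hA : α ^ 2 = ((n : ℝ) - 1) / (m * (m + (n : ℝ) - 2)) := by
    rw [hα, Real.sq_sqrt (by positivity)]
  have hc' : c = 1 / ((m - 1) * α) := by
    rw [hc, hα, show m * (m + (n:ℝ) - 2) / ((n:ℝ) - 1) = (((n:ℝ) - 1) / (m * (m + (n:ℝ) - 2)))⁻¹ by
      rw [inv_div], Real.sqrt_inv]
    field_simp
  intro t
  set a : ℝ := -2 * m / (m + (n : ℝ) - 1) with ha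
  set b : ℝ := -2 * ((n : ℝ) - 1) / (m + (n : ℝ) - 1) with hb
  have hWne : W t ≠ 0 := (hWpos t).ne'
  have hYne : Y t ≠ 0 := (hYpos t).ne'
  have h1 : 1 - α * X t ≠ 0 := sub_ne_zero.mpr (Ne.symm (hαX t))
  -- derivative of each factor
  have hu : HasDerivAt (fun s => W s ^ a)
      (a * (X t ^ 2 - Y t ^ 2 / (m - 1)) * W t ^ a) t := by
    have h := (hW t).rpow_const (p := a) (Or.inl hWne)
    convert h using 1
    rw [show W t ^ a = W t ^ (a - 1) * W t by
      rw [← Real.rpow_add_one hWne]; norm_num]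
    ring
  have hv : HasDerivAt (fun s => Y s ^ b)
      (b * ((X t ^ 2 - Y t ^ 2 / (m - 1)) - c * X t + 1 / (m - 1)) * Y t ^ b) t := by
    have h := (hY t).rpow_const (p := b) (Or.inl hYne)
    convert h using 1
    rw [show Y t ^ b = Y t ^ (b - 1) * Y t by
      rw [← Real.rpow_add_one hYne]; norm_num]
    ring
  have hg : HasDerivAt (fun s => (1 - α * X s) ^ 2)
      (2 * (1 - α * X t) * (-(α * (X t * (X t ^ 2 - Y t ^ 2 / (m - 1)) + c * Y t ^ 2 - X t)))) t := by
    have h := ((hasDerivAt_const t (1 : ℝ)).fun_sub ((hX t).const_mul α)).fun_pow 2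
    refine h.congr_deriv ?_
    push_cast
    ring
  have hd := (hu.fun_mul hv).fun_mul hg
  refine hd.congr_deriv ?_
  symm
  have key := boehm_key_identity m ((n : ℝ)) (X t) (Y t) α c hm1 hαpos.ne' hp0 hM0.ne' h1 hA hc'
  rw [← ha, ← hb] at key
  linear_combination (-(W t ^ a * Y t ^ b)) * key
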